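/- arXiv:1907.11981 — 4 statements merged into one kernel-verified Lean document; each statement's English description precedes it below -/
import Mathlib

section
/- Every complex Golay pair (A', B') of length n ≥ 3 is equivalent (via the operations of reversal, conjugate-reversal of A, swap, scaling A by i, and positional scaling by i) to a complex Golay pair (A, B) with a_0 = a_1 = b_0 = 1 and a_2 ∈ {1, -1, i}. -/
open Complex Finset

noncomputable def autocorr (n : ℕ) (A : ℕ → ℂ) (s : ℕ) : ℂ :=
  ∑ k ∈ Finset.range (n - s), A k * star (A (k + s))

noncomputable def hallPoly (n : ℕ) (A : ℕ → ℂ) (z : ℂ) : ℂ :=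
  ∑ k ∈ Finset.range n, A k * z ^ k

def isFourth (c : ℂ) : Prop := c = 1 ∨ c = -1 ∨ c = Complex.I ∨ c = -Complex.I

def isCGP (n : ℕ) (A B : ℕ → ℂ) : Prop :=
  (∀ k < n, isFourth (A k)) ∧ (∀ k < n, isFourth (B k)) ∧
  ∀ s, 1 ≤ s → s ≤ n - 1 → autocorr n A s + autocorr n B s = 0

noncomputable def revSeq (n : ℕ) (A : ℕ → ℂ) : ℕ → ℂ := fun k => A (n - 1 - k)

noncomputable def conjRevSeq (n : ℕ) (A : ℕ → ℂ) : ℕ → ℂ := fun k => star (A (n - 1 - k))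

noncomputable def scaleSeq (A : ℕ → ℂ) : ℕ → ℂ := fun k => Complex.I * A k

noncomputable def posScaleSeq (A : ℕ → ℂ) : ℕ → ℂ := fun k => Complex.I ^ k * A k

inductive GolayStep (n : ℕ) : ((ℕ → ℂ) × (ℕ → ℂ)) → ((ℕ → ℂ) × (ℕ → ℂ)) → Prop
  | e1 (A B : ℕ → ℂ) : GolayStep n (A, B) (revSeq n A, revSeq n B)
  | e2 (A B : ℕ → ℂ) : GolayStep n (A, B) (conjRevSeq n A, B)
  | e3 (A B : ℕ → ℂ) : GolayStep n (A, B) (B, A)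
  | e4 (A B : ℕ → ℂ) : GolayStep n (A, B) (scaleSeq A, B)
  | e5 (A B : ℕ → ℂ) : GolayStep n (A, B) (posScaleSeq A, posScaleSeq B)

lemma isFourth_mul {a b : ℂ} (ha : isFourth a) (hb : isFourth b) : isFourth (a * b) := by
  rcases ha with rfl|rfl|rfl|rfl <;> rcases hb with rfl|rfl|rfl|rfl <;>
    norm_num [isFourth, Complex.I_mul_I]

lemma isFourth_star {a : ℂ} (ha : isFourth a) : isFourth (star a) := by
  rcases ha with rfl|rfl|rfl|rfl <;> norm_num [isFourth, Complex.conj_I]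

lemma isFourth_I : isFourth Complex.I := by norm_num [isFourth]

lemma isFourth_I_pow (m : ℕ) : isFourth (Complex.I ^ m) := by
  induction m with
  | zero => norm_num [isFourth]
  | succ m ih => rw [pow_succ]; exact isFourth_mul ih isFourth_I

lemma isFourth_exists_pow {c : ℂ} (hc : isFourth c) : ∃ m : ℕ, Complex.I ^ m * c = 1 := by
  rcases hc with rfl|rfl|rfl|rfl
  · exact ⟨0, by norm_num⟩
  · exact ⟨2, by norm_num [Complex.I_sq]⟩
  · exact ⟨3, by simp [pow_succ, Complex.I_mul_I]⟩
  · exact ⟨1, by simp [Complex.I_mul_I]⟩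

lemma autocorr_scale (n : ℕ) (A : ℕ → ℂ) (s : ℕ) :
    autocorr n (scaleSeq A) s = autocorr n A s := by
  unfold autocorr scaleSeq
  apply Finset.sum_congr rfl
  intro k _
  rw [star_mul']; simp only [Complex.star_def, Complex.conj_I]
  ring_nf
  rw [Complex.I_sq]
  ring

lemma autocorr_posScale (n : ℕ) (A : ℕ → ℂ) (s : ℕ) :
    autocorr n (posScaleSeq A) s = (-Complex.I) ^ s * autocorr n A s := by
  unfold autocorr posScaleSeq
  rw [Finset.mul_sum]
  apply Finset.sum_congr rfl
  intro k _
  rw [star_mul', star_pow]; simp only [Complex.star_def, Complex.conj_I]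
  have h3 : (-Complex.I) ^ (k + s) = (-Complex.I) ^ k * (-Complex.I) ^ s := pow_add _ _ _
  rw [h3]
  have h2 : Complex.I ^ k * (-Complex.I) ^ k = 1 := by
    rw [← mul_pow]; simp [Complex.I_mul_I]
  calc Complex.I ^ k * A k * ((-Complex.I) ^ k * (-Complex.I) ^ s * star (A (k + s)))
      = (Complex.I ^ k * (-Complex.I) ^ k) * ((-Complex.I) ^ s * (A k * star (A (k + s)))) := by ring
    _ = (-Complex.I) ^ s * (A k * star (A (k + s))) := by rw [h2]; ring

lemma autocorr_rev (n : ℕ) (A : ℕ → ℂ) (s : ℕ) (hs : 1 ≤ s) :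
    autocorr n (revSeq n A) s = star (autocorr n A s) := by
  unfold autocorr revSeq
  rw [star_sum, ← Finset.sum_range_reflect (fun j => star (A j * star (A (j + s)))) (n - s)]
  apply Finset.sum_congr rfl
  intro k hk
  simp only [Finset.mem_range] at hk
  have h1 : n - s - 1 - k + s = n - 1 - k := by omega
  have h2 : n - s - 1 - k = n - 1 - (k + s) := by omega
  rw [star_mul', star_star, h1, h2]
  ring

lemma autocorr_conjRev (n : ℕ) (A : ℕ → ℂ) (s : ℕ) (hs : 1 ≤ s) :
    autocorr n (conjRevSeq n A) s = autocorr n A s := by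
  unfold autocorr conjRevSeq
  rw [← Finset.sum_range_reflect (fun j => A j * star (A (j + s))) (n - s)]
  apply Finset.sum_congr rfl
  intro k hk
  simp only [Finset.mem_range] at hk
  have h1 : n - s - 1 - k + s = n - 1 - k := by omega
  have h2 : n - s - 1 - k = n - 1 - (k + s) := by omega
  rw [star_star, h1, h2]
  ring

lemma step_preserves {n : ℕ} {p q : (ℕ → ℂ) × (ℕ → ℂ)}
    (h : GolayStep n p q) (hp : isCGP n p.1 p.2) : isCGP n q.1 q.2 := by
  obtain ⟨hA, hB, hcorr⟩ := hp
  cases h with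
  | e1 A B =>
    refine ⟨fun k hk => hA _ (by omega), fun k hk => hB _ (by omega), fun s hs hsn => ?_⟩
    simp only [autocorr_rev n _ s hs]
    rw [← star_add, hcorr s hs hsn, star_zero]
  | e2 A B =>
    exact ⟨fun k hk => isFourth_star (hA _ (by omega)), hB,
      fun s hs hsn => by rw [autocorr_conjRev n A s hs]; exact hcorr s hs hsn⟩
  | e3 A B =>
    exact ⟨hB, hA, fun s hs hsn => by rw [add_comm]; exact hcorr s hs hsn⟩
  | e4 A B =>
    exact ⟨fun k hk => isFourth_mul isFourth_I (hA _ hk), hB,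
      fun s hs hsn => by rw [autocorr_scale]; exact hcorr s hs hsn⟩
  | e5 A B =>
    refine ⟨fun k hk => isFourth_mul (isFourth_I_pow k) (hA _ hk),
      fun k hk => isFourth_mul (isFourth_I_pow k) (hB _ hk), fun s hs hsn => ?_⟩
    rw [autocorr_posScale, autocorr_posScale, ← mul_add, hcorr s hs hsn, mul_zero]

lemma rtg_preserves {n : ℕ} {p q : (ℕ → ℂ) × (ℕ → ℂ)}
    (h : Relation.ReflTransGen (GolayStep n) p q) (hp : isCGP n p.1 p.2) : isCGP n q.1 q.2 := by
  induction h with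
  | refl => exact hp
  | tail _ hstep ih => exact step_preserves hstep ih

lemma e4_chain (n m : ℕ) (A B : ℕ → ℂ) :
    Relation.ReflTransGen (GolayStep n) (A, B) ((fun k => Complex.I ^ m * A k), B) := by
  induction m with
  | zero =>
    have : (fun k => Complex.I ^ 0 * A k) = A := by funext k; simp
    rw [this]
  | succ m ih =>
    have hf : (fun k => Complex.I ^ (m + 1) * A k) = scaleSeq (fun k => Complex.I ^ m * A k) := by
      funext k; simp only [scaleSeq, pow_succ]; ring
    rw [hf]
    exact ih.tail (GolayStep.e4 _ _)

lemma e5_chain (n m : ℕ) (A B : ℕ → ℂ) :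
    Relation.ReflTransGen (GolayStep n) (A, B)
      ((fun k => (Complex.I ^ k) ^ m * A k), (fun k => (Complex.I ^ k) ^ m * B k)) := by
  induction m with
  | zero =>
    have h1 : (fun k => (Complex.I ^ k) ^ 0 * A k) = A := by funext k; simp
    have h2 : (fun k => (Complex.I ^ k) ^ 0 * B k) = B := by funext k; simp
    rw [h1, h2]
  | succ m ih =>
    have h1 : (fun k => (Complex.I ^ k) ^ (m + 1) * A k)
        = posScaleSeq (fun k => (Complex.I ^ k) ^ m * A k) := by
      funext k; simp only [posScaleSeq, pow_succ]; ring
    have h2 : (fun k => (Complex.I ^ k) ^ (m + 1) * B k)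
        = posScaleSeq (fun k => (Complex.I ^ k) ^ m * B k) := by
      funext k; simp only [posScaleSeq, pow_succ]; ring
    rw [h1, h2]
    exact ih.tail (GolayStep.e5 _ _)

theorem stmt6 (n : ℕ) (hn : 3 ≤ n) (A' B' : ℕ → ℂ) (h : isCGP n A' B') :
    ∃ A B : ℕ → ℂ, Relation.ReflTransGen (GolayStep n) (A', B') (A, B) ∧
      isCGP n A B ∧ A 0 = 1 ∧ A 1 = 1 ∧ B 0 = 1 ∧
      (A 2 = 1 ∨ A 2 = -1 ∨ A 2 = Complex.I) := by
  obtain ⟨hA', hB', hcorr'⟩ := h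
  -- Stage 1: normalize A 0 = 1
  obtain ⟨m1, hm1⟩ := isFourth_exists_pow (hA' 0 (by omega))
  set A1 : ℕ → ℂ := fun k => Complex.I ^ m1 * A' k with hA1def
  have c1 : Relation.ReflTransGen (GolayStep n) (A', B') (A1, B') := e4_chain n m1 A' B'
  -- Stage 2: normalize B 0 = 1
  obtain ⟨m2, hm2⟩ := isFourth_exists_pow (hB' 0 (by omega))
  set B1 : ℕ → ℂ := fun k => Complex.I ^ m2 * B' k with hB1def
  have c2 : Relation.ReflTransGen (GolayStep n) (A', B') (A1, B1) :=
    c1.trans ((Relation.ReflTransGen.single (GolayStep.e3 A1 B')).trans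
      ((e4_chain n m2 B' A1).trans (Relation.ReflTransGen.single (GolayStep.e3 B1 A1))))
  -- Stage 3: normalize A 1 = 1
  obtain ⟨m3, hm3⟩ := isFourth_exists_pow
    (isFourth_mul (isFourth_I_pow m1) (hA' 1 (by omega)) : isFourth (A1 1))
  set A2 : ℕ → ℂ := fun k => (Complex.I ^ k) ^ m3 * A1 k with hA2def
  set B2 : ℕ → ℂ := fun k => (Complex.I ^ k) ^ m3 * B1 k with hB2def
  have c3 : Relation.ReflTransGen (GolayStep n) (A', B') (A2, B2) :=
    c2.trans (e5_chain n m3 A1 B1)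
  have hCGP2 : isCGP n A2 B2 := rtg_preserves c3 ⟨hA', hB', hcorr'⟩
  have hA20 : A2 0 = 1 := by
    show (Complex.I ^ 0) ^ m3 * A1 0 = 1
    simpa using hm1
  have hA21 : A2 1 = 1 := by
    show (Complex.I ^ 1) ^ m3 * A1 1 = 1
    simpa using hm3
  have hB20 : B2 0 = 1 := by
    show (Complex.I ^ 0) ^ m3 * B1 0 = 1
    simpa using hm2
  have hA22 : isFourth (A2 2) := hCGP2.1 2 (by omega)
  by_cases hcase : A2 2 = -Complex.I
  · -- apply conjugate-reverse then reverse, then renormalize B 0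
    set A3 : ℕ → ℂ := revSeq n (conjRevSeq n A2) with hA3def
    set B3 : ℕ → ℂ := revSeq n B2 with hB3def
    have hB30 : isFourth (B3 0) := by
      show isFourth (B2 (n - 1 - 0))
      exact hCGP2.2.1 (n - 1 - 0) (by omega)
    obtain ⟨m4, hm4⟩ := isFourth_exists_pow hB30
    set B4 : ℕ → ℂ := fun k => Complex.I ^ m4 * B3 k with hB4def
    have c4 : Relation.ReflTransGen (GolayStep n) (A', B') (A3, B4) :=
      c3.trans ((Relation.ReflTransGen.single (GolayStep.e2 A2 B2)).trans
        ((Relation.ReflTransGen.single (GolayStep.e1 (conjRevSeq n A2) B2)).trans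
          ((Relation.ReflTransGen.single (GolayStep.e3 A3 B3)).trans
            ((e4_chain n m4 B3 A3).trans
              (Relation.ReflTransGen.single (GolayStep.e3 B4 A3))))))
    refine ⟨A3, B4, c4, rtg_preserves c4 ⟨hA', hB', hcorr'⟩, ?_, ?_, ?_, ?_⟩
    · show star (A2 (n - 1 - (n - 1 - 0))) = 1
      rw [show n - 1 - (n - 1 - 0) = 0 from by omega, hA20]; simp
    · show star (A2 (n - 1 - (n - 1 - 1))) = 1
      rw [show n - 1 - (n - 1 - 1) = 1 from by omega, hA21]; simp
    · exact hm4
    · right; right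
      show star (A2 (n - 1 - (n - 1 - 2))) = Complex.I
      rw [show n - 1 - (n - 1 - 2) = 2 from by omega, hcase]
      simp
  · refine ⟨A2, B2, c3, hCGP2, hA20, hA21, hB20, ?_⟩
    rcases hA22 with h4|h4|h4|h4
    · exact Or.inl h4
    · exact Or.inr (Or.inl h4)
    · exact Or.inr (Or.inr h4)
    · exact absurd h4 hcase
end

section
/- Let A be a complex sequence of length n, A_even the sequence obtained from A by replacing odd-indexed entries with 0, and A_odd the sequence obtained by replacing even-indexed entries with 0. Then for all z on the unit circle, |A_even(z)|^2 + |A_odd(z)|^2 = N_A(0) + 2·Re(∑_{s even, 1 ≤ s ≤ n-1} N_A(s)·z^{-s}). -/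
open Complex Finset

noncomputable def evenPoly (n : ℕ) (A : ℕ → ℂ) (z : ℂ) : ℂ :=
  ∑ k ∈ Finset.range n, if Even k then A k * z ^ k else 0

noncomputable def oddPoly (n : ℕ) (A : ℕ → ℂ) (z : ℂ) : ℂ :=
  ∑ k ∈ Finset.range n, if Odd k then A k * z ^ k else 0

theorem stmt8 (n : ℕ) (A : ℕ → ℂ) (z : ℂ) (hz : ‖z‖ = 1) :
    ((‖evenPoly n A z‖ ^ 2 + ‖oddPoly n A z‖ ^ 2 : ℝ) : ℂ) =
      autocorr n A 0 +
        2 * ((((∑ s ∈ (Finset.Icc 1 (n - 1)).filter Even,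
            autocorr n A s * z⁻¹ ^ s).re : ℝ)) : ℂ) := by
  have hz0 : z ≠ 0 := fun h => by simp [h] at hz
  have hmul : z * (starRingEnd ℂ) z = 1 := by
    rw [Complex.mul_conj, ← Complex.sq_norm, hz]; norm_num
  have hconj : (starRingEnd ℂ) z = z⁻¹ :=
    eq_inv_of_mul_eq_one_left (by rw [mul_comm] at hmul; exact hmul)
  set S := ∑ s ∈ (Finset.Icc 1 (n-1)).filter Even, autocorr n A s * z⁻¹ ^ s with hS
  have hrhs : 2 * ((S.re : ℝ) : ℂ) = S + (starRingEnd ℂ) S := by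
    rw [Complex.add_conj]; push_cast; ring
  have habs : ∀ w : ℂ, ((‖w‖ : ℂ)) ^ 2 = w * (starRingEnd ℂ) w := by
    intro w
    rw [Complex.mul_conj, ← Complex.sq_norm]
    push_cast
    ring
  push_cast
  rw [habs, habs, hrhs]
  -- main expansion
  classical
  set T : ℕ → ℕ → ℂ := fun j k =>
    if (Even j ↔ Even k) then A j * (starRingEnd ℂ) (A k) * (z ^ j * ((starRingEnd ℂ) z) ^ k) else 0
    with hT
  have hEO : evenPoly n A z * (starRingEnd ℂ) (evenPoly n A z) +
      oddPoly n A z * (starRingEnd ℂ) (oddPoly n A z) =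
      ∑ p ∈ Finset.range n ×ˢ Finset.range n, T p.1 p.2 := by
    rw [Finset.sum_product]
    unfold evenPoly oddPoly
    rw [map_sum, map_sum, Finset.sum_mul_sum, Finset.sum_mul_sum, ← Finset.sum_add_distrib]
    refine Finset.sum_congr rfl fun j _ => ?_
    rw [← Finset.sum_add_distrib]
    refine Finset.sum_congr rfl fun k _ => ?_
    by_cases h1 : Even j <;> by_cases h2 : Even k <;>
      simp [hT, h1, h2, Nat.not_even_iff_odd.symm, apply_ite (starRingEnd ℂ)] <;> ring
  set P := Finset.range n ×ˢ Finset.range n with hP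
  -- split into diagonal, upper, lower
  have hsplit : ∑ p ∈ P, T p.1 p.2 =
      (∑ p ∈ P.filter (fun p => p.1 = p.2), T p.1 p.2) +
      ((∑ p ∈ P.filter (fun p => p.1 < p.2), T p.1 p.2) +
       (∑ p ∈ P.filter (fun p => p.2 < p.1), T p.1 p.2)) := by
    rw [← Finset.sum_filter_add_sum_filter_not P (fun p => p.1 = p.2)]
    congr 1
    rw [← Finset.sum_filter_add_sum_filter_not (P.filter (fun p => ¬ p.1 = p.2))
      (fun p => p.1 < p.2), Finset.filter_filter, Finset.filter_filter]
    congr 1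
    · apply Finset.sum_congr _ (fun _ _ => rfl)
      apply Finset.filter_congr
      intro p _
      constructor
      · rintro ⟨_, h⟩; exact h
      · intro h; exact ⟨by omega, h⟩
    · apply Finset.sum_congr _ (fun _ _ => rfl)
      apply Finset.filter_congr
      intro p _
      constructor
      · rintro ⟨h1, h2⟩; omega
      · intro h; constructor <;> omega
  -- diagonal
  have hdiag : ∑ p ∈ P.filter (fun p => p.1 = p.2), T p.1 p.2 = autocorr n A 0 := by
    rw [show autocorr n A 0 = ∑ k ∈ Finset.range n, A k * (starRingEnd ℂ) (A k) by
      simp [autocorr]]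
    refine Finset.sum_nbij' (fun p => p.1) (fun k => (k, k)) ?_ ?_ ?_ ?_ ?_
    · intro p hp
      simp only [hP, Finset.mem_filter, Finset.mem_product, Finset.mem_range] at hp
      simp [hp.1.1]
    · intro k hk
      simp only [Finset.mem_range] at hk
      simp [hP, hk]
    · intro p hp
      simp only [hP, Finset.mem_filter, Finset.mem_product, Finset.mem_range] at hp
      ext <;> simp [hp.2.symm]
    · intro k _; rfl
    · intro p hp
      simp only [hP, Finset.mem_filter, Finset.mem_product, Finset.mem_range] at hp
      rw [hp.2]
      simp only [hT, iff_self, if_true]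
      rw [← mul_pow, hmul, one_pow, mul_one]
  -- upper triangle
  have key : ∀ (F : ℕ × ℕ → ℂ) (G : (Σ _ : ℕ, ℕ) → ℂ),
      (∀ p : ℕ × ℕ, p ∈ P.filter (fun p => p.1 < p.2) → F p = G ⟨p.2 - p.1, p.1⟩) →
      ∑ p ∈ P.filter (fun p => p.1 < p.2), F p =
      ∑ x ∈ (Finset.Icc 1 (n-1)).sigma (fun s => Finset.range (n - s)), G x := by
    intro F G hFG
    refine Finset.sum_nbij' (fun p => ⟨p.2 - p.1, p.1⟩) (fun x => (x.2, x.2 + x.1)) ?_ ?_ ?_ ?_ hFG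
    · intro p hp
      simp only [hP, Finset.mem_filter, Finset.mem_product, Finset.mem_range] at hp
      simp only [Finset.mem_sigma, Finset.mem_Icc, Finset.mem_range]
      omega
    · intro x hx
      simp only [Finset.mem_sigma, Finset.mem_Icc, Finset.mem_range] at hx
      simp only [hP, Finset.mem_filter, Finset.mem_product, Finset.mem_range]
      omega
    · intro p hp
      simp only [hP, Finset.mem_filter, Finset.mem_product, Finset.mem_range] at hp
      ext <;> simp <;> omega
    · intro x hx
      simp only [Finset.mem_sigma, Finset.mem_Icc, Finset.mem_range] at hx
      simp
  have hupper : ∑ p ∈ P.filter (fun p => p.1 < p.2), T p.1 p.2 = S := by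
    rw [key (fun p => T p.1 p.2) (fun x => T x.2 (x.2 + x.1))
      (by
        intro p hp
        simp only [hP, Finset.mem_filter, Finset.mem_product, Finset.mem_range] at hp
        have h2 : p.1 + (p.2 - p.1) = p.2 := by omega
        simp only []
        rw [h2])]
    rw [Finset.sum_sigma, hS, Finset.sum_filter]
    refine Finset.sum_congr rfl fun s hs => ?_
    rw [autocorr, Finset.sum_mul]
    by_cases hse : Even s
    · simp only [hse, if_true]
      refine Finset.sum_congr rfl fun j _ => ?_
      simp only [hT]
      rw [if_pos (by rw [Nat.even_add]; tauto)]
      rw [pow_add, ← hconj]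
      rw [show A j * (starRingEnd ℂ) (A (j + s)) * (z ^ j * ((starRingEnd ℂ) z ^ j * (starRingEnd ℂ) z ^ s))
        = A j * (starRingEnd ℂ) (A (j + s)) * ((z * (starRingEnd ℂ) z) ^ j * (starRingEnd ℂ) z ^ s) by ring,
        hmul, one_pow, one_mul, Complex.star_def, mul_assoc]
    · simp only [hse, if_false]
      apply Finset.sum_eq_zero
      intro j _
      simp only [hT]
      rw [if_neg]
      rw [Nat.even_add]
      tauto
  have hconjinv : (starRingEnd ℂ) z⁻¹ = z := by rw [map_inv₀, hconj, inv_inv]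
  have key2 : ∀ (F : ℕ × ℕ → ℂ) (G : (Σ _ : ℕ, ℕ) → ℂ),
      (∀ p : ℕ × ℕ, p ∈ P.filter (fun p => p.2 < p.1) → F p = G ⟨p.1 - p.2, p.2⟩) →
      ∑ p ∈ P.filter (fun p => p.2 < p.1), F p =
      ∑ x ∈ (Finset.Icc 1 (n-1)).sigma (fun s => Finset.range (n - s)), G x := by
    intro F G hFG
    refine Finset.sum_nbij' (fun p => ⟨p.1 - p.2, p.2⟩) (fun x => (x.2 + x.1, x.2)) ?_ ?_ ?_ ?_ hFG
    · intro p hp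
      simp only [hP, Finset.mem_filter, Finset.mem_product, Finset.mem_range] at hp
      simp only [Finset.mem_sigma, Finset.mem_Icc, Finset.mem_range]
      omega
    · intro x hx
      simp only [Finset.mem_sigma, Finset.mem_Icc, Finset.mem_range] at hx
      simp only [hP, Finset.mem_filter, Finset.mem_product, Finset.mem_range]
      omega
    · intro p hp
      simp only [hP, Finset.mem_filter, Finset.mem_product, Finset.mem_range] at hp
      ext <;> simp <;> omega
    · intro x hx
      simp only [Finset.mem_sigma, Finset.mem_Icc, Finset.mem_range] at hx
      simp
  have hlower : ∑ p ∈ P.filter (fun p => p.2 < p.1), T p.1 p.2 = (starRingEnd ℂ) S := by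
    rw [key2 (fun p => T p.1 p.2) (fun x => T (x.2 + x.1) x.2)
      (by
        intro p hp
        simp only [hP, Finset.mem_filter, Finset.mem_product, Finset.mem_range] at hp
        have h2 : p.2 + (p.1 - p.2) = p.1 := by omega
        simp only []
        rw [h2])]
    rw [Finset.sum_sigma, hS, map_sum, Finset.sum_filter]
    refine Finset.sum_congr rfl fun s hs => ?_
    by_cases hse : Even s
    · simp only [hse, if_true]
      rw [map_mul, autocorr, map_sum, Finset.sum_mul]
      refine Finset.sum_congr rfl fun j _ => ?_
      simp only [hT]
      rw [if_pos (by rw [Nat.even_add]; tauto)]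
      rw [map_pow, hconjinv, map_mul, Complex.star_def, Complex.conj_conj, pow_add]
      rw [show A (j + s) * (starRingEnd ℂ) (A j) * (z ^ j * z ^ s * (starRingEnd ℂ) z ^ j)
        = (starRingEnd ℂ) (A j) * A (j + s) * ((z * (starRingEnd ℂ) z) ^ j * z ^ s) by ring,
        hmul, one_pow, one_mul]
    · simp only [hse, if_false]
      apply Finset.sum_eq_zero
      intro j _
      simp only [hT]
      rw [if_neg]
      rw [Nat.even_add]
      tauto
  rw [hEO, hsplit, hdiag, hupper, hlower]
end

section
/- If (A, B) is a complex Golay pair of length n, then a_k·a_{n-k-1}·b_k·b_{n-k-1} = ±1 (i.e., is real) for each k = 0, ..., n-1. -/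
open Complex Finset

/-- parity: 1 if purely imaginary fourth root, 0 otherwise -/
noncomputable def eps (t : ℂ) : ZMod 2 := if t = Complex.I ∨ t = -Complex.I then 1 else 0

/-- integer imaginary part for fourth roots -/
noncomputable def ii (t : ℂ) : ℤ := if t = Complex.I then 1 else if t = -Complex.I then -1 else 0

lemma fourth_ne : (1:ℂ) ≠ Complex.I ∧ (1:ℂ) ≠ -Complex.I ∧ (-1:ℂ) ≠ Complex.I ∧
    (-1:ℂ) ≠ -Complex.I ∧ (Complex.I:ℂ) ≠ -Complex.I := by
  refine ⟨?_, ?_, ?_, ?_, ?_⟩ <;> simp [Complex.ext_iff] <;> norm_num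

lemma ii_im {t : ℂ} (h : isFourth t) : (ii t : ℝ) = t.im := by
  obtain ⟨h1, h2, h3, h4, h5⟩ := fourth_ne
  rcases h with h | h | h | h <;> subst h <;>
    simp [ii, h1, h2, h3, h4, h5, h5.symm]

lemma ii_eps {t : ℂ} : ((ii t : ZMod 2)) = eps t := by
  obtain ⟨h1, h2, h3, h4, h5⟩ := fourth_ne
  unfold ii eps
  by_cases hI : t = Complex.I
  · simp [hI, h5]
  · by_cases hmI : t = -Complex.I
    · subst hmI
      have hne : ¬(-Complex.I = Complex.I) := by simpa using h5.symm
      rw [if_neg hne, if_pos rfl, if_pos (Or.inr rfl)]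
      push_cast
      decide
    · simp [hI, hmI]

lemma isFourth_star_s13 {t : ℂ} (h : isFourth t) : isFourth (star t) := by
  rcases h with h | h | h | h <;> subst h <;> simp [isFourth]

lemma isFourth_mul_s13 {u v : ℂ} (hu : isFourth u) (hv : isFourth v) : isFourth (u * v) := by
  rcases hu with h | h | h | h <;> rcases hv with h' | h' | h' | h' <;> subst h <;> subst h' <;>
    simp [isFourth, Complex.I_mul_I]

lemma eps_mul {u v : ℂ} (hu : isFourth u) (hv : isFourth v) :
    eps (u * v) = eps u + eps v := by
  obtain ⟨h1, h2, h3, h4, h5⟩ := fourth_ne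
  rcases hu with h | h | h | h <;> rcases hv with h' | h' | h' | h' <;> subst h <;> subst h' <;>
    simp [eps, Complex.I_mul_I, h1, h2, h3, h4, h5, h5.symm] <;> decide

lemma eps_star {t : ℂ} (h : isFourth t) : eps (star t) = eps t := by
  obtain ⟨h1, h2, h3, h4, h5⟩ := fourth_ne
  rcases h with h | h | h | h <;> subst h <;>
    simp [eps, h1, h2, h3, h4, h5, h5.symm]

lemma z2 (a : ZMod 2) : a + a = 0 := by revert a; decide

lemma zA (x y w : ZMod 2) (h : x + w = y) : w = y + x := by revert x y w; decide

lemma zB (x y z : ZMod 2) (h : x + (y + z) = 0) : z + x = y := by revert x y z; decide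

lemma zC (a b : ZMod 2) : b = a + b + a := by revert a b; decide

lemma zD (p q r t u : ZMod 2) (h1 : q + r = u) (h2 : p + t = u) :
    p + q + (r + t) = 0 := by revert p q r t u; decide

lemma zE (a b c d : ZMod 2) (h : a + c + (b + d) = 0) : a + b + c + d = 0 := by
  revert a b c d; decide

lemma eps_zero_cases {t : ℂ} (h : isFourth t) (he : eps t = 0) : t = 1 ∨ t = -1 := by
  rcases h with h | h | h | h <;> subst h <;> simp_all [eps]

theorem stmt13 (n : ℕ) (A B : ℕ → ℂ) (h : isCGP n A B) :
    ∀ k < n, A k * A (n - k - 1) * B k * B (n - k - 1) = 1 ∨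
             A k * A (n - k - 1) * B k * B (n - k - 1) = -1 := by
  obtain ⟨hA, hB, hC⟩ := h
  set e : ℕ → ZMod 2 := fun k => eps (A k) + eps (B k) with he
  set S : ℕ → ZMod 2 := fun j => ∑ k ∈ Finset.range j, e k with hS
  -- key parity relation from zero autocorrelation
  have key : ∀ s, 1 ≤ s → s ≤ n - 1 →
      ∑ k ∈ Finset.range (n - s), (e k + e (k + s)) = 0 := by
    intro s hs1 hs2
    have hn : 1 ≤ n := by
      by_contra hn
      interval_cases n <;> omega
    have hsn : s < n := by omega
    have hmem : ∀ k ∈ Finset.range (n - s), k < n ∧ k + s < n := by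
      intro k hk
      simp only [Finset.mem_range] at hk
      omega
    have hzc := hC s hs1 hs2
    -- imaginary parts sum to zero
    have him : ∑ k ∈ Finset.range (n - s),
        ((A k * star (A (k + s))).im + (B k * star (B (k + s))).im) = 0 := by
      have := congrArg Complex.im hzc
      simpa [autocorr, Complex.im_sum, Finset.sum_add_distrib] using this
    have hint : ∑ k ∈ Finset.range (n - s),
        (ii (A k * star (A (k + s))) + ii (B k * star (B (k + s)))) = 0 := by
      have hcast : ((∑ k ∈ Finset.range (n - s),
          (ii (A k * star (A (k + s))) + ii (B k * star (B (k + s))))) : ℝ) = 0 := by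
        push_cast
        rw [← him]
        apply Finset.sum_congr rfl
        intro k hk
        obtain ⟨hk1, hk2⟩ := hmem k hk
        rw [ii_im (isFourth_mul_s13 (hA k hk1) (isFourth_star_s13 (hA (k+s) hk2))),
            ii_im (isFourth_mul_s13 (hB k hk1) (isFourth_star_s13 (hB (k+s) hk2)))]
      exact_mod_cast hcast
    have hz2 : ((∑ k ∈ Finset.range (n - s),
        (ii (A k * star (A (k + s))) + ii (B k * star (B (k + s)))) : ℤ) : ZMod 2) = 0 := by
      rw [hint]; simp
    push_cast at hz2
    rw [← hz2]
    apply Finset.sum_congr rfl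
    intro k hk
    obtain ⟨hk1, hk2⟩ := hmem k hk
    rw [ii_eps, ii_eps, eps_mul (hA k hk1) (isFourth_star_s13 (hA (k+s) hk2)),
        eps_mul (hB k hk1) (isFourth_star_s13 (hB (k+s) hk2)),
        eps_star (hA (k+s) hk2), eps_star (hB (k+s) hk2)]
    simp [he]
    ring
  -- prefix sum relation
  have Srel : ∀ s, s ≤ n → S s + S (n - s) = S n := by
    intro s hsle
    rcases Nat.eq_zero_or_pos s with rfl | hs1
    · simp [hS]
    rcases eq_or_lt_of_le hsle with rfl | hslt
    · simp [hS]
    have hs2 : s ≤ n - 1 := by omega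
    have hk := key s hs1 hs2
    rw [Finset.sum_add_distrib] at hk
    have h2 : ∑ k ∈ Finset.range (n - s), e (k + s) = ∑ k ∈ Finset.Ico s n, e k := by
      rw [Finset.sum_Ico_eq_sum_range]
      apply Finset.sum_congr rfl
      intro k _
      ring_nf
    have h3 : S s + ∑ k ∈ Finset.Ico s n, e k = S n := by
      simp only [hS]
      exact Finset.sum_range_add_sum_Ico e hsle
    rw [h2] at hk
    have : ∑ k ∈ Finset.Ico s n, e k = S n + S s := zA _ _ _ h3
    rw [this] at hk
    -- hk : S (n-s) + (S n + S s) = 0  (up to defeq of S)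
    exact zB _ _ _ hk
  intro k hk
  have hk1 : k + 1 ≤ n := hk
  have e1 : e k = S (k+1) + S k := by
    simp only [hS, Finset.sum_range_succ]
    exact zC _ _
  have e2 : e (n - k - 1) = S (n - k) + S (n - k - 1) := by
    have : n - k = (n - k - 1) + 1 := by omega
    rw [this]
    simp only [hS, Finset.sum_range_succ]
    exact zC _ _
  have r1 := Srel k (le_of_lt hk)
  have r2 := Srel (k+1) hk1
  have hnk : n - (k + 1) = n - k - 1 := by omega
  rw [hnk] at r2
  have hsum : e k + e (n - k - 1) = 0 := by
    rw [e1, e2]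
    exact zD _ _ _ _ _ r1 r2
  -- now conclude
  have hkn : n - k - 1 < n := by omega
  have hf : isFourth (A k * A (n - k - 1) * B k * B (n - k - 1)) :=
    isFourth_mul_s13 (isFourth_mul_s13 (isFourth_mul_s13 (hA k hk) (hA _ hkn)) (hB k hk)) (hB _ hkn)
  have heps : eps (A k * A (n - k - 1) * B k * B (n - k - 1)) = 0 := by
    rw [eps_mul (isFourth_mul_s13 (isFourth_mul_s13 (hA k hk) (hA _ hkn)) (hB k hk)) (hB _ hkn),
        eps_mul (isFourth_mul_s13 (hA k hk) (hA _ hkn)) (hB k hk),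
        eps_mul (hA k hk) (hA _ hkn)]
    have := hsum
    simp only [he] at this
    exact zE _ _ _ _ this
  exact eps_zero_cases hf heps
end

section
/- Let A ∈ {±1, ±i}^7 be any sequence of the form [1, x, 1, y, 1, z, 1] (with x, y, z ∈ {±1, ±i} arbitrary). Then A is not a member of any complex Golay pair. -/
open Complex Finset

lemma isFourth_unit {c : ℂ} (h : isFourth c) : c * star c = 1 := by
  rcases h with h | h | h | h <;> subst h <;>
    simp [Complex.star_def, Complex.conj_I]

theorem stmt18 (x y z : ℂ) (hx : isFourth x) (hy : isFourth y) (hz : isFourth z) :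
    ¬ ∃ B : ℕ → ℂ,
      isCGP 7 (fun k => if k = 1 then x else if k = 3 then y else if k = 5 then z else 1) B := by
  rintro ⟨B, hA, hB, hcorr⟩
  have hx1 := isFourth_unit hx
  have hy1 := isFourth_unit hy
  have hz1 := isFourth_unit hz
  have hb0 := isFourth_unit (hB 0 (by norm_num))
  have hb1 := isFourth_unit (hB 1 (by norm_num))
  have hb2 := isFourth_unit (hB 2 (by norm_num))
  have hb3 := isFourth_unit (hB 3 (by norm_num))
  have hb4 := isFourth_unit (hB 4 (by norm_num))
  have hb5 := isFourth_unit (hB 5 (by norm_num))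
  have hb6 := isFourth_unit (hB 6 (by norm_num))
  have e2 := hcorr 2 (by norm_num) (by norm_num)
  have e4 := hcorr 4 (by norm_num) (by norm_num)
  have e6 := hcorr 6 (by norm_num) (by norm_num)
  simp only [autocorr] at e2 e4 e6
  norm_num [Finset.sum_range_succ] at e2 e4 e6
  have e2' := congrArg (starRingEnd ℂ) e2
  have e4' := congrArg (starRingEnd ℂ) e4
  have e6' := congrArg (starRingEnd ℂ) e6
  simp only [map_add, map_mul, map_one, map_zero, Complex.conj_conj] at e2' e4' e6'
  simp only [Complex.star_def] at hx1 hy1 hz1 hb0 hb1 hb2 hb3 hb4 hb5 hb6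
  set w := x + y + z with hw
  set T1 := B 0 + B 1 + B 2 + B 3 + B 4 + B 5 + B 6 with hT1
  set T2 := B 0 - B 1 + B 2 - B 3 + B 4 - B 5 + B 6 with hT2
  have key : w * (starRingEnd ℂ) w * 2 + T1 * (starRingEnd ℂ) T1 + T2 * (starRingEnd ℂ) T2 = -4 := by
    simp only [hw, hT1, hT2, map_add, map_sub]
    linear_combination 2*e2 + 2*e4 + 2*e6 + 2*e2' + 2*e4' + 2*e6' +
      2*hx1 + 2*hy1 + 2*hz1 + 2*hb0 + 2*hb1 + 2*hb2 + 2*hb3 + 2*hb4 + 2*hb5 + 2*hb6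
  rw [Complex.mul_conj, Complex.mul_conj, Complex.mul_conj] at key
  have key2 : (Complex.normSq w) * 2 + Complex.normSq T1 + Complex.normSq T2 = -4 := by
    exact_mod_cast key
  nlinarith [Complex.normSq_nonneg w, Complex.normSq_nonneg T1, Complex.normSq_nonneg T2]
end
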